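/- Let L > 0 and define Υ(z) = exp(max{L/10 − z, 0}/L) − 1 for z ≥ 0. Let A and B be real numbers with 0 ≤ A ≤ 27L/4000 and 0 ≤ B ≤ 243/160000, and set ρ(x) = e^{B}·Υ(A + x) for x ≥ 0. Then: (a) 0 ≤ ρ(x) ≤ 0.2 for all x ≥ 0; (b) ρ(x) ≥ 0.05 for all x ∈ [0, L/40]; (c) ρ(x) = 0 for all x ≥ L/10; and (d) ρ is nonincreasing and convex on [0,∞). -/

import Mathlib

/-- Quantitative properties of the explicit supersolution
`ρ(x) = e^B·Υ(A+x)` with `Υ(z) = exp(max{L/10 − z, 0}/L) − 1`,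
`0 ≤ A ≤ 27L/4000` and `0 ≤ B ≤ 243/160000`:
(a) `0 ≤ ρ ≤ 0.2` on `[0,∞)`; (b) `ρ ≥ 0.05` on `[0, L/40]`;
(c) `ρ = 0` on `[L/10, ∞)`; (d) `ρ` is nonincreasing and convex on `[0,∞)`. -/
theorem supersolution_bounds (L A B : ℝ) (hL : 0 < L)
    (hA0 : 0 ≤ A) (hA : A ≤ 27 * L / 4000)
    (hB0 : 0 ≤ B) (hB : B ≤ 243 / 160000) :
    let Υ : ℝ → ℝ := fun z => Real.exp (max (L / 10 - z) 0 / L) - 1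
    let ρ : ℝ → ℝ := fun x => Real.exp B * Υ (A + x)
    (∀ x, 0 ≤ x → 0 ≤ ρ x ∧ ρ x ≤ 0.2) ∧
      (∀ x ∈ Set.Icc (0 : ℝ) (L / 40), 0.05 ≤ ρ x) ∧
      (∀ x, L / 10 ≤ x → ρ x = 0) ∧
      AntitoneOn ρ (Set.Ici (0 : ℝ)) ∧ ConvexOn ℝ (Set.Ici (0 : ℝ)) ρ := by
  intro Υ ρ
  set f : ℝ → ℝ := fun x => max (L / 10 - (A + x)) 0 / L with hf_def
  have hρ : ∀ x, ρ x = Real.exp B * (Real.exp (f x) - 1) := fun x => rfl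
  -- bounds on exp B
  have heB1 : (1 : ℝ) ≤ Real.exp B := Real.one_le_exp hB0
  have heBu : Real.exp B ≤ 160000 / 159757 := by
    have h1 : (1 : ℝ) - 243 / 160000 ≤ Real.exp (-B) := by
      have := Real.add_one_le_exp (-B); linarith
    have h2 : Real.exp B * Real.exp (-B) = 1 := by
      rw [← Real.exp_add]; simp
    nlinarith [Real.exp_pos (-B), Real.exp_pos B]
  refine ⟨?_, ?_, ?_, ?_, ?_⟩
  · intro x hx
    have hfx0 : 0 ≤ f x := div_nonneg (le_max_right _ _) hL.le
    have hfxu : f x ≤ 1 / 10 := by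
      have : max (L / 10 - (A + x)) 0 ≤ L / 10 := by
        apply max_le (by linarith) (by linarith)
      rw [hf_def, div_le_iff₀ hL]; linarith
    constructor
    · rw [hρ]
      have : (1 : ℝ) ≤ Real.exp (f x) := Real.one_le_exp hfx0
      nlinarith [Real.exp_pos B]
    · rw [hρ]
      have hem : Real.exp (f x) ≤ 10 / 9 := by
        have h1 : (1 : ℝ) - 1 / 10 ≤ Real.exp (-(1/10)) := by
          have := Real.add_one_le_exp (-(1/10) : ℝ); linarith
        have h2 : Real.exp (1/10 : ℝ) * Real.exp (-(1/10)) = 1 := by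
          rw [← Real.exp_add]; simp
        have h3 : Real.exp (f x) ≤ Real.exp (1/10 : ℝ) := Real.exp_le_exp.2 hfxu
        nlinarith [Real.exp_pos (-(1/10) : ℝ), Real.exp_pos (1/10 : ℝ)]
      have h1 : (1 : ℝ) ≤ Real.exp (f x) := Real.one_le_exp hfx0
      nlinarith
  · intro x hx
    obtain ⟨hx0, hxL⟩ := hx
    rw [hρ]
    have hfl : (273 : ℝ) / 4000 ≤ f x := by
      rw [hf_def, le_div_iff₀ hL]
      have : 273 / 4000 * L ≤ L / 10 - (A + x) := by nlinarith
      exact this.trans (le_max_left _ _)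
    have h1 : 1 + (273 : ℝ) / 4000 ≤ Real.exp (f x) := by
      have := Real.add_one_le_exp ((273 : ℝ)/4000)
      linarith [Real.exp_le_exp.2 hfl]
    nlinarith
  · intro x hx
    rw [hρ]
    have : f x = 0 := by
      rw [hf_def]
      simp only
      rw [max_eq_right (by linarith), zero_div]
    rw [this, Real.exp_zero]; ring
  · intro x hx y hy hxy
    rw [hρ, hρ]
    have hfle : f y ≤ f x := by
      rw [hf_def]
      exact (div_le_div_iff_of_pos_right hL).2 (max_le_max (by linarith) le_rfl)
    have := Real.exp_le_exp.2 hfle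
    nlinarith [Real.exp_pos B]
  · -- convexity
    have hf1 : ConvexOn ℝ (Set.Ici (0:ℝ)) (fun x => L / 10 - (A + x)) := by
      refine ⟨convex_Ici 0, ?_⟩
      intro x _ y _ a b ha hb hab
      simp only [smul_eq_mul]
      nlinarith
    have hf2 : ConvexOn ℝ (Set.Ici (0:ℝ)) (fun _ : ℝ => (0:ℝ)) := convexOn_const 0 (convex_Ici 0)
    have hmax : ConvexOn ℝ (Set.Ici (0:ℝ)) (fun x => max (L / 10 - (A + x)) 0) := hf1.sup hf2
    have hf : ConvexOn ℝ (Set.Ici (0:ℝ)) f := by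
      have := hmax.smul (c := 1 / L) (by positivity)
      have heq : f = fun x => (1 / L) • max (L / 10 - (A + x)) 0 := by
        funext x
        rw [hf_def]
        simp only [smul_eq_mul]
        ring
      rw [heq]; exact this
    have hexpf : ConvexOn ℝ (Set.Ici (0:ℝ)) (fun x => Real.exp (f x)) := by
      refine ⟨convex_Ici 0, ?_⟩
      intro x hx y hy a b ha hb hab
      calc Real.exp (f (a • x + b • y)) ≤ Real.exp (a * f x + b * f y) := by
            apply Real.exp_le_exp.2
            have := hf.2 hx hy ha hb hab
            simpa using this
        _ ≤ a * Real.exp (f x) + b * Real.exp (f y) := by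
            have := convexOn_exp.2 (Set.mem_univ (f x)) (Set.mem_univ (f y)) ha hb hab
            simpa using this
    have h1 : ConvexOn ℝ (Set.Ici (0:ℝ))
        (fun x => Real.exp B * Real.exp (f x) + (-Real.exp B)) := by
      exact (hexpf.smul (Real.exp_pos B).le).add_const _
    convert h1 using 2 with x
    rw [hρ]; ring
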